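/- The restricted first-return generating function on the empty comb satisfies $P^{(<n)}_\infty(x) = (1-x)\,\frac{(1+\sqrt{x})^{n-1} - (1-\sqrt{x})^{n-1}}{(1+\sqrt{x})^{n} - (1-\sqrt{x})^{n}}$ for all $n \geq 1$ and $0 < x < 1$. -/
import Mathlib


/-- On the half-line `N∞`, the restricted first-return generating functions, defined
by the recursion `P^{(<n+1)}(x) = (1-x)/(2 - P^{(<n)}(x))` with `P^{(<1)}(x) = 0`,
satisfy `P^{(<n)}(x) = (1-x)((1+√x)^{n-1} - (1-√x)^{n-1})/((1+√x)^n - (1-√x)^n)`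
for all `n ≥ 1` and `0 < x < 1`. -/
theorem restricted_first_return_closed_form (x : ℝ) (hx0 : 0 < x) (hx1 : x < 1)
    (Q : ℕ → ℝ) (hQ1 : Q 1 = 0)
    (hQrec : ∀ n : ℕ, 1 ≤ n → Q (n + 1) = (1 - x) / (2 - Q n)) :
    ∀ n : ℕ, 1 ≤ n →
      Q n = (1 - x) *
          (((1 + Real.sqrt x) ^ (n - 1) - (1 - Real.sqrt x) ^ (n - 1)) /
            ((1 + Real.sqrt x) ^ n - (1 - Real.sqrt x) ^ n)) := by
  set s := Real.sqrt x with hs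
  have hs0 : 0 < s := Real.sqrt_pos.mpr hx0
  have hs1 : s < 1 := by
    have := Real.sqrt_lt_sqrt (le_of_lt hx0) hx1
    simpa [Real.sqrt_one] using this
  have hsq : s ^ 2 = x := by
    rw [sq]; exact Real.mul_self_sqrt hx0.le
  set a := 1 + s with ha
  set b := 1 - s with hb
  have hb0 : 0 ≤ b := by simp [hb]; linarith
  have hba : b < a := by simp [ha, hb]; linarith
  have hab : a * b = 1 - x := by
    have : a * b = 1 - s ^ 2 := by ring
    rw [this, hsq]
  have hsum : a + b = 2 := by simp [ha, hb]; ring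
  have hdiff : ∀ n : ℕ, 1 ≤ n → 0 < a ^ n - b ^ n := by
    intro n hn
    have := pow_lt_pow_left₀ hba hb0 (Nat.one_le_iff_ne_zero.mp hn)
    linarith
  intro n hn
  induction n with
  | zero => omega
  | succ m ih =>
    rcases Nat.eq_or_lt_of_le hn with h | h
    · -- m + 1 = 1
      have hm : m = 0 := by omega
      subst hm
      simp [hQ1, ha, hb]
    · have hm : 1 ≤ m := by omega
      have ihm := ih hm
      have hd : 0 < a ^ m - b ^ m := hdiff m hm
      have hd' : 0 < a ^ (m + 1) - b ^ (m + 1) := hdiff (m + 1) (by omega)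
      rw [hQrec m hm, ihm]
      have h2Q : 2 - (1 - x) * ((a ^ (m - 1) - b ^ (m - 1)) / (a ^ m - b ^ m))
          = (a ^ (m + 1) - b ^ (m + 1)) / (a ^ m - b ^ m) := by
        rw [← hab, ← hsum]
        field_simp
        obtain ⟨k, rfl⟩ := Nat.exists_eq_add_of_le hm
        simp only [Nat.add_sub_cancel_left] at *
        ring
      rw [h2Q, Nat.add_sub_cancel, div_div_eq_mul_div, mul_div_assoc]
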